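/- Linear programming bound for energy (Yudin): let f : (0,4] → ℝ be a potential and suppose h : [−1,1] → ℝ satisfies (i) h(t) ≤ f(2−2t)/2 for all t ∈ [−1,1), and (ii) h(t) = Σ_{k=0}^{d} α_k P_k(t) where α_k ≥ 0 for k ≥ 1 and the kernels (x,y) ↦ P_k(⟨x,y⟩) are positive-definite on S^{n−1} with P₀ ≡ 1. Then for every finite C ⊆ S^{n−1}, E_f(C) ≥ α₀|C|² − h(1)|C|. -/

import Mathlib

open RealInnerProductSpace Classical

/-- Yudin's linear programming bound for potential energy on the sphere:
if `h(t) = Σ_k α_k P_k(t)` with `α_k ≥ 0` for `k ≥ 1`, `P₀ ≡ 1`, each `P_k`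
(`k ≥ 1`) positive definite on the sphere, and `h(t) ≤ f(2−2t)/2` for
`t ∈ [−1,1)`, then every finite set `C` of unit vectors satisfies
`E_f(C) ≥ α₀|C|² − h(1)|C|`. -/
theorem stmt_14 {n : ℕ} (f : ℝ → ℝ) (h : ℝ → ℝ) (d : ℕ)
    (P : Fin (d + 1) → (ℝ → ℝ)) (α : Fin (d + 1) → ℝ)
    (hP0 : ∀ t, P 0 t = 1)
    (hα : ∀ k, k ≠ 0 → 0 ≤ α k)
    (hPk : ∀ k : Fin (d + 1), k ≠ 0 →
      ∀ D : Finset (EuclideanSpace ℝ (Fin n)), (∀ x ∈ D, ‖x‖ = 1) →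
        0 ≤ ∑ x ∈ D, ∑ y ∈ D, P k ⟪x, y⟫)
    (hh : ∀ t ∈ Set.Icc (-1 : ℝ) 1, h t = ∑ k, α k * P k t)
    (hhf : ∀ t ∈ Set.Ico (-1 : ℝ) 1, h t ≤ f (2 - 2 * t) / 2)
    (C : Finset (EuclideanSpace ℝ (Fin n))) (hC : ∀ x ∈ C, ‖x‖ = 1) :
    α 0 * (C.card : ℝ) ^ 2 - h 1 * (C.card : ℝ) ≤
      (1 / 2) * ∑ p ∈ (C ×ˢ C).filter (fun p => p.1 ≠ p.2), f (dist p.1 p.2 ^ 2) := by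
  have hinner : ∀ x ∈ C, ∀ y ∈ C, ⟪x, y⟫ ∈ Set.Icc (-1 : ℝ) 1 := by
    intro x hx y hy
    have habs := abs_real_inner_le_norm x y
    rw [hC x hx, hC y hy] at habs
    simp only [mul_one] at habs
    exact ⟨(abs_le.mp habs).1, (abs_le.mp habs).2⟩
  have hdist : ∀ x ∈ C, ∀ y ∈ C, dist x y ^ 2 = 2 - 2 * ⟪x, y⟫ := by
    intro x hx y hy
    rw [dist_eq_norm, norm_sub_sq_real, hC x hx, hC y hy]; ring
  have hself : ∀ x ∈ C, ⟪x, x⟫ = (1 : ℝ) := by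
    intro x hx
    rw [real_inner_self_eq_norm_sq, hC x hx]; norm_num
  set S := ∑ x ∈ C, ∑ y ∈ C, h ⟪x, y⟫ with hSdef
  have hS_eq : S = ∑ k, α k * ∑ x ∈ C, ∑ y ∈ C, P k ⟪x, y⟫ := by
    calc S = ∑ x ∈ C, ∑ y ∈ C, ∑ k, α k * P k ⟪x, y⟫ := by
          refine Finset.sum_congr rfl fun x hx => Finset.sum_congr rfl fun y hy => ?_
          exact hh _ (hinner x hx y hy)
      _ = ∑ x ∈ C, ∑ k, ∑ y ∈ C, α k * P k ⟪x, y⟫ :=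
          Finset.sum_congr rfl fun x _ => Finset.sum_comm
      _ = ∑ k, ∑ x ∈ C, ∑ y ∈ C, α k * P k ⟪x, y⟫ := Finset.sum_comm
      _ = ∑ k, α k * ∑ x ∈ C, ∑ y ∈ C, P k ⟪x, y⟫ := by
          simp [Finset.mul_sum]
  have hSlb : α 0 * (C.card : ℝ) ^ 2 ≤ S := by
    rw [hS_eq, ← Finset.add_sum_erase _ _ (Finset.mem_univ (0 : Fin (d + 1)))]
    have h0 : α 0 * ∑ x ∈ C, ∑ y ∈ C, P 0 ⟪x, y⟫ = α 0 * (C.card : ℝ) ^ 2 := by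
      simp only [hP0, Finset.sum_const, nsmul_eq_mul, mul_one]; ring
    rw [h0]
    have hrest : 0 ≤ ∑ k ∈ Finset.univ.erase (0 : Fin (d + 1)),
        α k * ∑ x ∈ C, ∑ y ∈ C, P k ⟪x, y⟫ := by
      refine Finset.sum_nonneg fun k hk => ?_
      have hk0 := Finset.ne_of_mem_erase hk
      exact mul_nonneg (hα k hk0) (hPk k hk0 C hC)
    linarith
  have hdiag : ∑ p ∈ (C ×ˢ C).filter (fun p => p.1 ≠ p.2), h ⟪p.1, p.2⟫
      = S - h 1 * (C.card : ℝ) := by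
    have hsplit := Finset.sum_filter_add_sum_filter_not (C ×ˢ C)
      (fun p => p.1 = p.2) (fun p => h ⟪p.1, p.2⟫)
    have hall : ∑ p ∈ C ×ˢ C, h ⟪p.1, p.2⟫ = S := by
      rw [hSdef, Finset.sum_product]
    have heq : ∑ p ∈ (C ×ˢ C).filter (fun p => p.1 = p.2), h ⟪p.1, p.2⟫
        = h 1 * (C.card : ℝ) := by
      rw [Finset.sum_filter, Finset.sum_product]
      have : ∀ x ∈ C, (∑ y ∈ C, if x = y then h ⟪x, y⟫ else 0) = h 1 := by
        intro x hx
        rw [Finset.sum_ite_eq C x (fun y => h ⟪x, y⟫)]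
        simp [hx, hself x hx, hC x hx]
      rw [Finset.sum_congr rfl this]
      simp [mul_comm]
    have hne : (C ×ˢ C).filter (fun p => ¬ p.1 = p.2)
        = (C ×ˢ C).filter (fun p => p.1 ≠ p.2) := rfl
    rw [hne] at hsplit
    rw [hall, heq] at hsplit
    linarith
  have hcomp : ∑ p ∈ (C ×ˢ C).filter (fun p => p.1 ≠ p.2), h ⟪p.1, p.2⟫
      ≤ (1 / 2) * ∑ p ∈ (C ×ˢ C).filter (fun p => p.1 ≠ p.2), f (dist p.1 p.2 ^ 2) := by
    rw [Finset.mul_sum]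
    refine Finset.sum_le_sum fun p hp => ?_
    obtain ⟨hpm, hpne⟩ := Finset.mem_filter.mp hp
    obtain ⟨h1, h2⟩ := Finset.mem_product.mp hpm
    have hlt : ⟪p.1, p.2⟫ < 1 := by
      have hd : 0 < dist p.1 p.2 := dist_pos.mpr hpne
      have := hdist p.1 h1 p.2 h2
      nlinarith
    have hico : ⟪p.1, p.2⟫ ∈ Set.Ico (-1 : ℝ) 1 :=
      ⟨(hinner p.1 h1 p.2 h2).1, hlt⟩
    have := hhf _ hico
    rw [← hdist p.1 h1 p.2 h2] at this
    linarith
  linarith
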